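/- arXiv:1810.00276 — 5 statements merged into one kernel-verified Lean document; each statement's English description precedes it below -/
import Mathlib

section
/- Let δ ∈ [0,1], τ₂ > 0, and let g, c > 0. Define γ₂ = δ·c·g / ((1−δ)·c·g + c·σ² + 1) with σ² ≥ 0. If δ ≤ τ₂/(τ₂+1), then γ₂ < τ₂ for all g > 0; i.e., the outage condition γ₂ ≥ τ₂ is impossible. -/
theorem weak_user_outage_certain (δ τ₂ c σ2 : ℝ)
    (hδ0 : 0 ≤ δ) (hδ1 : δ ≤ 1) (hτ₂ : 0 < τ₂) (hc : 0 < c) (hσ : 0 ≤ σ2)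
    (hδle : δ ≤ τ₂ / (τ₂ + 1)) :
    ∀ g : ℝ, 0 < g → δ * c * g / ((1 - δ) * c * g + c * σ2 + 1) < τ₂ := by
  intro g hg
  have hD : 0 < (1 - δ) * c * g + c * σ2 + 1 := by
    have h1 : 0 ≤ (1 - δ) * c * g :=
      mul_nonneg (mul_nonneg (by linarith) hc.le) hg.le
    have h2 : 0 ≤ c * σ2 := mul_nonneg hc.le hσ
    linarith
  rw [div_lt_iff₀ hD]
  have hδle' : δ * (τ₂ + 1) ≤ τ₂ := by
    have := (le_div_iff₀ (by linarith : (0:ℝ) < τ₂ + 1)).mp hδle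
    linarith
  nlinarith [mul_pos hc hg, mul_nonneg hc.le hσ, mul_nonneg (mul_nonneg hc.le hg.le) (sub_nonneg.2 hδle')]
end

section
/- For a > 0, b > 0 and nonnegative integer n, ∫₀^∞ z^n · exp(−a/z − b·z) dz = 2·(a/b)^{(n+1)/2} · K_{n+1}(2√(ab)), where K_ν denotes the modified Bessel function of the second kind. -/
open MeasureTheory Real
open Set

/-- The modified Bessel function of the second kind `K_ν`, via its standard
integral representation `K_ν(x) = ∫₀^∞ e^{-x cosh t} cosh (ν t) dt`. -/
noncomputable def besselK (ν x : ℝ) : ℝ :=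
  ∫ t in Set.Ioi (0 : ℝ), exp (-x * cosh t) * cosh (ν * t)


lemma sq_div_eight_le_cosh (t : ℝ) : t ^ 2 / 8 ≤ Real.cosh t := by
  have key : ∀ s : ℝ, 0 ≤ s → s ^ 2 / 8 ≤ Real.cosh s := by
    intro s hs
    have h1 := Real.add_one_le_exp (s / 2)
    have hsq : (s / 2 + 1) * (s / 2 + 1) ≤ Real.exp (s / 2) * Real.exp (s / 2) :=
      mul_self_le_mul_self (by linarith) (by linarith)
    have hexp : Real.exp (s / 2) * Real.exp (s / 2) = Real.exp s := by
      rw [← Real.exp_add]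
      congr 1
      ring
    have hpos := Real.exp_pos (-s)
    rw [Real.cosh_eq]
    nlinarith
  calc t ^ 2 / 8 = |t| ^ 2 / 8 := by rw [sq_abs]
  _ ≤ Real.cosh |t| := key _ (abs_nonneg t)
  _ = Real.cosh t := Real.cosh_abs t

lemma integrable_exp_quadratic' {x : ℝ} (hx : 0 < x) (ν : ℝ) :
    Integrable fun t : ℝ => Real.exp (-x * t ^ 2 + ν * t) := by
  have h0 : Integrable fun t : ℝ => Real.exp (-x * t ^ 2) := integrable_exp_neg_mul_sq hx
  have h1 := (h0.comp_sub_right (ν / (2 * x))).const_mul (Real.exp (ν ^ 2 / (4 * x)))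
  refine h1.congr (Filter.Eventually.of_forall fun t => ?_)
  simp only [← Real.exp_add]
  congr 1
  field_simp
  ring

lemma integrable_exp_cosh {x : ℝ} (hx : 0 < x) (ν : ℝ) :
    Integrable fun t : ℝ => Real.exp (ν * t - x * Real.cosh t) := by
  have hg : Integrable fun t : ℝ => Real.exp (-(x / 8) * t ^ 2 + ν * t) :=
    integrable_exp_quadratic' (by linarith) ν
  refine hg.mono' ?_ (Filter.Eventually.of_forall fun t => ?_)
  · exact (Real.continuous_exp.comp (by fun_prop)).aestronglyMeasurable
  · rw [Real.norm_eq_abs, Real.abs_exp]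
    refine Real.exp_le_exp.mpr ?_
    nlinarith [sq_div_eight_le_cosh t]

lemma integral_exp_cosh_eq {x : ℝ} (hx : 0 < x) (ν : ℝ) :
    ∫ t : ℝ, Real.exp (ν * t - x * Real.cosh t) = 2 * besselK ν x := by
  set g : ℝ → ℝ := fun t => Real.exp (ν * t - x * Real.cosh t) with hg
  have hint : Integrable g := integrable_exp_cosh hx ν
  have h1 : ∫ t : ℝ, g t = (∫ t in Iic (0:ℝ), g t) + ∫ t in Ioi (0:ℝ), g t :=
    (intervalIntegral.integral_Iic_add_Ioi hint.integrableOn hint.integrableOn).symm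
  have h2 : ∫ t in Iic (0:ℝ), g t = ∫ t in Ioi (0:ℝ), g (-t) := by
    rw [integral_comp_neg_Ioi, neg_zero]
  have h3 : ∫ t in Ioi (0:ℝ), (g (-t) + g t) =
      (∫ t in Ioi (0:ℝ), g (-t)) + ∫ t in Ioi (0:ℝ), g t :=
    integral_add (hint.comp_neg.integrableOn) (hint.integrableOn)
  have h4 : ∀ t : ℝ, g (-t) + g t = 2 * (Real.exp (-x * Real.cosh t) * Real.cosh (ν * t)) := by
    intro t
    simp only [hg, Real.cosh_neg, mul_neg, Real.cosh_eq, Real.exp_sub, Real.exp_neg, neg_mul]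
    have := Real.exp_ne_zero (x * Real.cosh t)
    field_simp
    ring
  rw [h1, h2, ← h3]
  rw [besselK, ← integral_const_mul]
  exact setIntegral_congr_fun measurableSet_Ioi fun t _ => h4 t

theorem bessel_integral_GR_3_471_9 (a b : ℝ) (n : ℕ) (ha : 0 < a) (hb : 0 < b) :
    ∫ z in Set.Ioi (0 : ℝ), z ^ n * exp (-a / z - b * z) =
      2 * (a / b) ^ (((n : ℝ) + 1) / 2) * besselK (n + 1) (2 * Real.sqrt (a * b)) := by
  set c : ℝ := Real.sqrt (a / b) with hcdef
  have hc : 0 < c := Real.sqrt_pos.mpr (div_pos ha hb)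
  set x : ℝ := 2 * Real.sqrt (a * b) with hxdef
  have hx : 0 < x := by positivity
  have hcsq : c ^ 2 = a / b := Real.sq_sqrt (div_pos ha hb).le
  have hbc : b * c = Real.sqrt (a * b) := by
    rw [show a * b = (b * c) ^ 2 by rw [mul_pow, hcsq]; field_simp]
    exact (Real.sqrt_sq (by positivity)).symm
  have hac : a = b * c ^ 2 := by rw [hcsq]; field_simp
  set F : ℝ → ℝ := fun z => z ^ n * Real.exp (-a / z - b * z) with hF
  have key : ∀ t : ℝ, Real.exp t * F (c * Real.exp t)
      = c ^ n * Real.exp (((n : ℝ) + 1) * t - x * Real.cosh t) := by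
    intro t
    have he := Real.exp_ne_zero t
    have harg : -a / (c * Real.exp t) - b * (c * Real.exp t) = -(x * Real.cosh t) := by
      rw [Real.cosh_eq, hxdef, ← hbc, hac, Real.exp_neg]
      field_simp
      ring
    simp only [hF, mul_pow, harg]
    rw [show ((n : ℝ) + 1) * t - x * Real.cosh t = t + ((n : ℝ) * t + -(x * Real.cosh t)) by ring,
      Real.exp_add, Real.exp_add, Real.exp_nat_mul]
    ring
  have hsub1 : ∫ z in Set.Ioi (0:ℝ), F z = c * ∫ z in Set.Ioi (0:ℝ), F (c * z) := by
    rw [integral_comp_mul_left_Ioi F 0 hc, mul_zero, smul_eq_mul, ← mul_assoc,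
      mul_inv_cancel₀ hc.ne', one_mul]
  have himg : Real.exp '' Set.univ = Set.Ioi (0:ℝ) := by
    rw [Set.image_univ, Real.range_exp]
  have hsub2 : ∫ z in Set.Ioi (0:ℝ), F (c * z) = ∫ t : ℝ, Real.exp t * F (c * Real.exp t) := by
    rw [← himg, integral_image_eq_integral_abs_deriv_smul MeasurableSet.univ
      (fun t _ => (Real.hasDerivAt_exp t).hasDerivWithinAt) Real.exp_injective.injOn]
    simp [Real.abs_exp]
  have hpow : c * c ^ n = (a / b) ^ (((n : ℝ) + 1) / 2) := by
    rw [← pow_succ' c n, hcdef, Real.sqrt_eq_rpow,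
      ← Real.rpow_natCast ((a / b) ^ ((1:ℝ)/2)) (n + 1),
      ← Real.rpow_mul (div_pos ha hb).le]
    congr 1
    push_cast
    ring
  calc ∫ z in Set.Ioi (0:ℝ), z ^ n * Real.exp (-a / z - b * z)
      = c * ∫ t : ℝ, Real.exp t * F (c * Real.exp t) := by rw [← hsub2, ← hsub1]
    _ = c * ∫ t : ℝ, c ^ n * Real.exp (((n : ℝ) + 1) * t - x * Real.cosh t) := by
        congr 1; exact integral_congr_ae (Filter.Eventually.of_forall key)
    _ = c * (c ^ n * (2 * besselK ((n : ℝ) + 1) x)) := by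
        rw [integral_const_mul, integral_exp_cosh_eq hx]
    _ = 2 * (a / b) ^ (((n : ℝ) + 1) / 2) * besselK ((n : ℝ) + 1) x := by
        rw [← hpow]; ring
end

section
/- Let g be exponential with mean d^{−α} (d, α > 0), let g₂ be exponential with mean Ω₂ > 0, independent of g, and let P, η, τ₀, σ² > 0. Then P( g > τ₀/P and g₂ > τ₀(σ² + 1/(η(Pg − τ₀))) ) = e^{−σ²τ₀/Ω₂ − τ₀ d^α/P} · ω·K₁(ω), where ω = 2√(τ₀/(η P d^{−α} Ω₂)). -/
open MeasureTheory ProbabilityTheory Real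

open Set Filter Topology

lemma tendsto_sinh_atTop : Tendsto Real.sinh atTop atTop := by
  refine tendsto_atTop_mono' _ ?_ (tendsto_id.atTop_div_const two_pos)
  filter_upwards [eventually_ge_atTop (0:ℝ)] with t ht
  have h1 := Real.add_one_le_exp t
  have h2 : Real.exp (-t) ≤ 1 := Real.exp_le_one_iff.mpr (by linarith)
  rw [Real.sinh_eq]
  simp only [id]
  linarith

lemma intA {x : ℝ} (hx : 0 < x) :
    IntegrableOn (fun t => cosh t * exp (-(x * sinh t))) (Ioi (0:ℝ)) := by
  have hderiv : ∀ t ∈ Ici (0:ℝ), HasDerivAt (fun t => -(x⁻¹ * exp (-(x * sinh t))))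
      (cosh t * exp (-(x * sinh t))) t := by
    intro t _
    have h1 : HasDerivAt (fun t : ℝ => -(x * sinh t)) (-(x * cosh t)) t :=
      ((Real.hasDerivAt_sinh t).const_mul x).neg
    have h2 := (h1.exp.const_mul x⁻¹).neg
    refine HasDerivAt.congr_deriv h2 ?_
    field_simp [hx.ne']
  refine integrableOn_Ioi_deriv_of_nonneg' (l := 0) hderiv (fun t _ => by positivity) ?_
  have h3 : Tendsto (fun t : ℝ => -(x * sinh t)) atTop atBot :=
    tendsto_neg_atBot_iff.mpr (tendsto_sinh_atTop.const_mul_atTop hx)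
  have h4 : Tendsto (fun t : ℝ => -(x⁻¹ * exp (-(x * sinh t)))) atTop (nhds (-(x⁻¹ * 0))) :=
    ((Real.tendsto_exp_atBot.comp h3).const_mul x⁻¹).neg
  simpa using h4

lemma intB {x : ℝ} (hx : 0 < x) :
    IntegrableOn (fun t => exp t * exp (-(x * cosh t))) (Ioi (0:ℝ)) := by
  refine Integrable.mono ((intA hx).const_mul 2) ?_ ?_
  · exact (Real.continuous_exp.mul
      ((Real.continuous_exp.comp ((continuous_const.mul Real.continuous_cosh).neg)))).aestronglyMeasurable
  · filter_upwards with t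
    have h1 : Real.exp t ≤ 2 * cosh t := by
      rw [Real.cosh_eq]; have := (Real.exp_pos (-t)).le; nlinarith [Real.exp_pos t]
    have hsc : Real.sinh t ≤ Real.cosh t := by
      rw [Real.sinh_eq, Real.cosh_eq]; have := (Real.exp_pos (-t)).le; linarith
    have h2 : Real.exp (-(x * cosh t)) ≤ Real.exp (-(x * sinh t)) :=
      Real.exp_le_exp.mpr (by nlinarith)
    rw [Real.norm_eq_abs, Real.norm_eq_abs, abs_of_nonneg (by positivity),
      abs_of_nonneg (by positivity)]
    calc Real.exp t * Real.exp (-(x * cosh t)) ≤ 2 * cosh t * Real.exp (-(x * sinh t)) := by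
          have hc := Real.cosh_pos t
          nlinarith [Real.exp_pos t, Real.exp_pos (-(x * cosh t)), Real.exp_pos (-(x * sinh t))]
      _ = 2 * (cosh t * Real.exp (-(x * sinh t))) := by ring

lemma intC {x : ℝ} (hx : 0 < x) :
    IntegrableOn (fun t => exp (-t) * exp (-(x * cosh t))) (Ioi (0:ℝ)) := by
  refine Integrable.mono (intB hx) ?_ ?_
  · exact ((Real.continuous_exp.comp continuous_neg).mul
      ((Real.continuous_exp.comp ((continuous_const.mul Real.continuous_cosh).neg)))).aestronglyMeasurable
  · filter_upwards [ae_restrict_mem measurableSet_Ioi] with t ht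
    have h1 : Real.exp (-t) ≤ Real.exp t := Real.exp_le_exp.mpr (by simp at ht ⊢; linarith)
    rw [Real.norm_eq_abs, Real.norm_eq_abs, abs_of_nonneg (by positivity),
      abs_of_nonneg (by positivity)]
    nlinarith [Real.exp_pos (-(x * cosh t)), Real.exp_pos (-t)]

lemma intD {x : ℝ} (hx : 0 < x) :
    IntegrableOn (fun t => exp (-x * cosh t) * cosh (1 * t)) (Ioi (0:ℝ)) := by
  refine Integrable.mono (intA hx) ?_ ?_
  · exact ((Real.continuous_exp.comp ((continuous_const.mul Real.continuous_cosh))).mul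
      (Real.continuous_cosh.comp (continuous_const.mul continuous_id))).aestronglyMeasurable
  · filter_upwards with t
    have hsc : Real.sinh t ≤ Real.cosh t := by
      rw [Real.sinh_eq, Real.cosh_eq]; have := (Real.exp_pos (-t)).le; linarith
    have h2 : Real.exp (-x * cosh t) ≤ Real.exp (-(x * sinh t)) :=
      Real.exp_le_exp.mpr (by nlinarith)
    rw [Real.norm_eq_abs, Real.norm_eq_abs, one_mul, abs_of_nonneg (by positivity),
      abs_of_nonneg (by positivity), mul_comm]
    have hc := Real.cosh_pos t
    nlinarith [Real.exp_pos (-x * cosh t)]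

lemma image_exp_Ioi {c : ℝ} (hc : 0 < c) : (fun t : ℝ => c * exp t) '' Ioi 0 = Ioi c := by
  ext v
  simp only [mem_image, mem_Ioi]
  constructor
  · rintro ⟨t, ht, rfl⟩
    have h1 : 1 < Real.exp t := by
      rw [← Real.exp_zero]; exact Real.exp_lt_exp.mpr ht
    nlinarith
  · intro hv
    refine ⟨Real.log (v / c), ?_, ?_⟩
    · apply Real.log_pos; rw [lt_div_iff₀ hc]; linarith
    · have hv0 : 0 < v / c := div_pos (hc.trans hv) hc
      rw [Real.exp_log hv0]; field_simp

lemma image_exp_neg_Ioi {c : ℝ} (hc : 0 < c) :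
    (fun t : ℝ => c * exp (-t)) '' Ioi 0 = Ioo 0 c := by
  ext v
  simp only [mem_image, mem_Ioi, mem_Ioo]
  constructor
  · rintro ⟨t, ht, rfl⟩
    have h1 : Real.exp (-t) < 1 := by
      rw [← Real.exp_zero]; exact Real.exp_lt_exp.mpr (by linarith)
    have h2 := Real.exp_pos (-t)
    constructor
    · positivity
    · nlinarith
  · rintro ⟨hv0, hvc⟩
    refine ⟨-Real.log (v / c), ?_, ?_⟩
    · have : Real.log (v / c) < 0 := by
        apply Real.log_neg (by positivity)
        rw [div_lt_one hc]; exact hvc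
      linarith
    · rw [neg_neg, Real.exp_log (by positivity)]; field_simp

lemma bessel_integral {a b : ℝ} (ha : 0 < a) (hb : 0 < b) :
    IntegrableOn (fun v => exp (-(a/v) - b*v)) (Ioi (0:ℝ)) ∧
    ∫ v in Ioi (0:ℝ), exp (-(a/v) - b*v)
      = (2 * Real.sqrt (a/b)) * besselK 1 (2 * Real.sqrt (a*b)) := by
  set s := Real.sqrt (a*b) with hs_def
  set c := Real.sqrt (a/b) with hc_def
  have hs : 0 < s := Real.sqrt_pos.mpr (by positivity)
  have hc : 0 < c := Real.sqrt_pos.mpr (by positivity)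
  set x := 2 * s with hx_def
  have hx : 0 < x := by positivity
  have hcsq : c * c = a / b := Real.mul_self_sqrt (by positivity)
  have hssq : s * s = a * b := Real.mul_self_sqrt (by positivity)
  have hbc : b * c = s := by
    rw [hc_def, hs_def, ← Real.sqrt_sq hb.le, ← Real.sqrt_mul (sq_nonneg b)]
    congr 1
    rw [Real.sqrt_sq hb.le]
    field_simp
  have hsc : s * c = a := by
    rw [hs_def, hc_def, ← Real.sqrt_mul (by positivity : (0:ℝ) ≤ a*b), ← Real.sqrt_sq ha.le]
    congr 1
    rw [Real.sqrt_sq ha.le]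
    field_simp
  set G : ℝ → ℝ := fun v => Real.exp (-(a/v) - b*v) with hG
  clear_value G
  clear_value s c x
  have hpt : ∀ t : ℝ, G (c * Real.exp t) = Real.exp (-(x * Real.cosh t)) := by
    intro t
    have het := (Real.exp_pos t).ne'
    have h1 : a / (c * Real.exp t) = s * Real.exp (-t) := by
      rw [← hsc, Real.exp_neg]; field_simp
    have h2 : b * (c * Real.exp t) = s * Real.exp t := by rw [← mul_assoc, hbc]
    have harg : -(a / (c * Real.exp t)) - b * (c * Real.exp t) = -(x * Real.cosh t) := by
      rw [h1, h2, Real.cosh_eq, hx_def]; ring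
    rw [hG]
    exact congrArg Real.exp harg
  -- substitution v = c * exp t on (c, ∞)
  have hder1 : ∀ t ∈ Ioi (0:ℝ),
      HasDerivWithinAt (fun t => c * Real.exp t) (c * Real.exp t) (Ioi 0) t :=
    fun t _ => ((Real.hasDerivAt_exp t).const_mul c).hasDerivWithinAt
  have hinj1 : InjOn (fun t : ℝ => c * Real.exp t) (Ioi 0) := fun u _ v _ h =>
    Real.exp_injective (mul_left_cancel₀ hc.ne' h)
  have hEq1 : EqOn (fun t => |c * Real.exp t| • G (c * Real.exp t))
      (fun t => c * (Real.exp t * Real.exp (-(x * Real.cosh t)))) (Ioi 0) := by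
    intro t _
    simp only [smul_eq_mul]
    rw [abs_of_pos (by positivity), hpt t]
    ring
  have hsub1 : ∫ v in Ioi c, G v
      = ∫ t in Ioi (0:ℝ), c * (Real.exp t * Real.exp (-(x * Real.cosh t))) := by
    rw [← image_exp_Ioi hc,
      integral_image_eq_integral_abs_deriv_smul measurableSet_Ioi hder1 hinj1]
    exact setIntegral_congr_fun measurableSet_Ioi hEq1
  have hint1 : IntegrableOn G (Ioi c) := by
    rw [← image_exp_Ioi hc,
      integrableOn_image_iff_integrableOn_abs_deriv_smul measurableSet_Ioi hder1 hinj1]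
    exact IntegrableOn.congr_fun ((intB hx).const_mul c) (fun t ht => (hEq1 ht).symm) measurableSet_Ioi
  -- substitution v = c * exp (-t) on (0, c)
  have hder2 : ∀ t ∈ Ioi (0:ℝ),
      HasDerivWithinAt (fun t : ℝ => c * Real.exp (-t))
        (c * (Real.exp (-t) * (-1))) (Ioi 0) t := by
    intro t _
    exact (((Real.hasDerivAt_exp (-t)).comp t ((hasDerivAt_id t).neg)).const_mul
      c).hasDerivWithinAt
  have hinj2 : InjOn (fun t : ℝ => c * Real.exp (-t)) (Ioi 0) := fun u _ v _ h =>
    neg_injective (Real.exp_injective (mul_left_cancel₀ hc.ne' h))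
  have hEq2 : EqOn (fun t => |c * (Real.exp (-t) * (-1))| • G (c * Real.exp (-t)))
      (fun t => c * (Real.exp (-t) * Real.exp (-(x * Real.cosh t)))) (Ioi 0) := by
    intro t _
    simp only [smul_eq_mul, mul_neg_one]
    rw [mul_neg, abs_neg, abs_of_pos (by positivity)]
    have := hpt (-t)
    rw [Real.cosh_neg] at this
    rw [this]
    ring
  have hsub2 : ∫ v in Ioo 0 c, G v
      = ∫ t in Ioi (0:ℝ), c * (Real.exp (-t) * Real.exp (-(x * Real.cosh t))) := by
    rw [← image_exp_neg_Ioi hc,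
      integral_image_eq_integral_abs_deriv_smul measurableSet_Ioi hder2 hinj2]
    exact setIntegral_congr_fun measurableSet_Ioi hEq2
  have hint2 : IntegrableOn G (Ioc 0 c) := by
    rw [integrableOn_Ioc_iff_integrableOn_Ioo, ← image_exp_neg_Ioi hc,
      integrableOn_image_iff_integrableOn_abs_deriv_smul measurableSet_Ioi hder2 hinj2]
    exact IntegrableOn.congr_fun ((intC hx).const_mul c) (fun t ht => (hEq2 ht).symm) measurableSet_Ioi
  have hunion : Ioc (0:ℝ) c ∪ Ioi c = Ioi 0 := Ioc_union_Ioi_eq_Ioi hc.le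
  have hintG : IntegrableOn G (Ioi (0:ℝ)) := by rw [← hunion]; exact hint2.union hint1
  refine ⟨hintG, ?_⟩
  have hsplit : ∫ v in Ioi (0:ℝ), G v = (∫ v in Ioc 0 c, G v) + ∫ v in Ioi c, G v := by
    rw [← hunion]
    exact setIntegral_union (Ioc_disjoint_Ioi le_rfl) measurableSet_Ioi hint2 hint1
  rw [hsplit, integral_Ioc_eq_integral_Ioo, hsub2, hsub1,
    ← integral_add ((intC hx).const_mul c) ((intB hx).const_mul c)]
  have hfin : ∀ t : ℝ, c * (Real.exp (-t) * Real.exp (-(x * Real.cosh t)))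
      + c * (Real.exp t * Real.exp (-(x * Real.cosh t)))
      = (2 * c) * (Real.exp (-x * Real.cosh t) * Real.cosh (1 * t)) := by
    intro t
    rw [one_mul, Real.cosh_eq, neg_mul]
    ring
  rw [integral_congr_ae (ae_of_all _ hfin)]
  rw [MeasureTheory.integral_const_mul, besselK]

lemma expMeasure_Ioi {r y : ℝ} (hr : 0 < r) (hy : 0 ≤ y) :
    expMeasure r (Ioi y) = ENNReal.ofReal (exp (-(r * y))) := by
  haveI := isProbabilityMeasure_expMeasure hr
  have hpdf : expMeasure r = volume.withDensity (exponentialPDF r) := rfl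
  have hIic : expMeasure r (Iic y) = ENNReal.ofReal (1 - exp (-(r * y))) := by
    rw [hpdf, withDensity_apply _ measurableSet_Iic,
      lintegral_exponentialPDF_eq_antiDeriv hr, if_pos hy]
  have hcompl := measure_compl (μ := expMeasure r) (measurableSet_Iic (a := y))
    (measure_ne_top _ _)
  rw [compl_Iic] at hcompl
  have h1e : 0 ≤ 1 - exp (-(r * y)) := by
    have : Real.exp (-(r * y)) ≤ 1 := Real.exp_le_one_iff.mpr (by nlinarith)
    linarith
  rw [hcompl, measure_univ, hIic, ← ENNReal.ofReal_one, ← ENNReal.ofReal_sub _ h1e]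
  congr 1
  ring

theorem dpa_weak_user_success_probability {Ω : Type*} [MeasurableSpace Ω]
    (μ : Measure Ω) [IsProbabilityMeasure μ]
    (g g₂ : Ω → ℝ) (hg : Measurable g) (hg₂ : Measurable g₂)
    (d α Ω₂ P η τ₀ σ2 : ℝ)
    (hd : 0 < d) (hα : 0 < α) (hΩ₂ : 0 < Ω₂) (hP : 0 < P) (hη : 0 < η)
    (hτ₀ : 0 < τ₀) (hσ : 0 < σ2)
    (hind : IndepFun g g₂ μ)
    (hdg : Measure.map g μ = expMeasure (1 / d ^ (-α)))
    (hdg₂ : Measure.map g₂ μ = expMeasure (1 / Ω₂)) :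
    μ {ω | τ₀ / P < g ω ∧ τ₀ * (σ2 + 1 / (η * (P * g ω - τ₀))) < g₂ ω} =
      ENNReal.ofReal (exp (-(σ2 * τ₀ / Ω₂) - τ₀ * d ^ α / P) *
        (2 * Real.sqrt (τ₀ / (η * P * d ^ (-α) * Ω₂))) *
        besselK 1 (2 * Real.sqrt (τ₀ / (η * P * d ^ (-α) * Ω₂)))) := by
  have hηP : 0 < η * P := mul_pos hη hP
  have hdα : (0:ℝ) < d ^ α := rpow_pos_of_pos hd α
  have hr₁_eq : 1 / d ^ (-α) = d ^ α := by
    rw [rpow_neg hd.le, one_div, inv_inv]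
  have hr₁ : 0 < 1 / d ^ (-α) := by rw [hr₁_eq]; exact hdα
  have hr₂ : 0 < 1 / Ω₂ := by positivity
  have hc : 0 < τ₀ / P := div_pos hτ₀ hP
  haveI i1 : IsProbabilityMeasure (expMeasure (1 / d ^ (-α))) :=
    isProbabilityMeasure_expMeasure hr₁
  haveI i2 : IsProbabilityMeasure (expMeasure (1 / Ω₂)) :=
    isProbabilityMeasure_expMeasure hr₂
  set S : Set (ℝ × ℝ) :=
    {p : ℝ × ℝ | τ₀ / P < p.1 ∧ τ₀ * (σ2 + 1 / (η * (P * p.1 - τ₀))) < p.2} with hS_def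
  have hfm : Measurable fun x : ℝ => τ₀ * (σ2 + 1 / (η * (P * x - τ₀))) := by
    fun_prop
  have hS : MeasurableSet S :=
    (measurableSet_lt measurable_const measurable_fst).inter
      (measurableSet_lt (hfm.comp measurable_fst) measurable_snd)
  have hpre : μ {ω | τ₀ / P < g ω ∧ τ₀ * (σ2 + 1 / (η * (P * g ω - τ₀))) < g₂ ω}
      = Measure.map (fun ω => (g ω, g₂ ω)) μ S := by
    rw [Measure.map_apply (hg.prodMk hg₂) hS]
    rfl
  have hmap := (indepFun_iff_map_prod_eq_prod_map_map hg.aemeasurable hg₂.aemeasurable).mp hind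
  rw [hpre, hmap, hdg, hdg₂, Measure.prod_apply hS]
  -- the inner kernel
  have hker : (fun x => expMeasure (1 / Ω₂) (Prod.mk x ⁻¹' S))
      = (Ioi (τ₀ / P)).indicator (fun x =>
          ENNReal.ofReal (exp (-(1 / Ω₂ * (τ₀ * (σ2 + 1 / (η * (P * x - τ₀)))))))) := by
    funext x
    by_cases hx : τ₀ / P < x
    · rw [indicator_of_mem (mem_Ioi.mpr hx)]
      have hPx : 0 < P * x - τ₀ := by
        rw [div_lt_iff₀ hP] at hx
        nlinarith
      have hfx : 0 ≤ τ₀ * (σ2 + 1 / (η * (P * x - τ₀))) := by positivity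
      have hset : Prod.mk x ⁻¹' S = Ioi (τ₀ * (σ2 + 1 / (η * (P * x - τ₀)))) := by
        ext y
        simp only [hS_def, mem_preimage, mem_setOf_eq, mem_Ioi]
        exact ⟨fun h => h.2, fun h => ⟨hx, h⟩⟩
      rw [hset, expMeasure_Ioi hr₂ hfx]
    · rw [indicator_of_notMem (fun h => hx (mem_Ioi.mp h))]
      have hset : Prod.mk x ⁻¹' S = ∅ := by
        ext y
        simp only [hS_def, mem_preimage, mem_setOf_eq, mem_empty_iff_false, iff_false]
        exact fun h => hx h.1
      rw [hset]
      simp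
  rw [hker, lintegral_indicator measurableSet_Ioi]
  have hpdf : expMeasure (1 / d ^ (-α)) = volume.withDensity (exponentialPDF (1 / d ^ (-α))) := rfl
  have hHm : Measurable fun x : ℝ =>
      ENNReal.ofReal (exp (-(1 / Ω₂ * (τ₀ * (σ2 + 1 / (η * (P * x - τ₀))))))) := by
    fun_prop
  have hpdfm : Measurable (exponentialPDF (1 / d ^ (-α))) :=
    (measurable_exponentialPDFReal _).ennreal_ofReal
  rw [hpdf, restrict_withDensity measurableSet_Ioi,
    lintegral_withDensity_eq_lintegral_mul _ hpdfm hHm]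
  -- rewrite integrand as ofReal of a real function
  set F : ℝ → ℝ := fun x => (1 / d ^ (-α)) * Real.exp (-((1 / d ^ (-α)) * x)) *
      Real.exp (-(1 / Ω₂ * (τ₀ * (σ2 + 1 / (η * (P * x - τ₀)))))) with hF_def
  have hEqF : ∀ x ∈ Ioi (τ₀ / P),
      (exponentialPDF (1 / d ^ (-α)) * fun x =>
        ENNReal.ofReal (exp (-(1 / Ω₂ * (τ₀ * (σ2 + 1 / (η * (P * x - τ₀)))))))) x
      = ENNReal.ofReal (F x) := by
    intro x hx
    have hx0 : (0:ℝ) ≤ x := le_of_lt (hc.trans hx)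
    simp only [Pi.mul_apply]
    rw [exponentialPDF_of_nonneg hx0, hF_def, ← ENNReal.ofReal_mul (by positivity)]
  rw [setLIntegral_congr_fun measurableSet_Ioi hEqF]
  -- now a real integral computation
  have hz : (0:ℝ) < d ^ (-α) := rpow_pos_of_pos hd (-α)
  set a : ℝ := τ₀ / Ω₂ with ha_def
  set b : ℝ := (1 / d ^ (-α)) / (η * P) with hb_def
  set C : ℝ := (1 / d ^ (-α)) / (η * P) * Real.exp (-(σ2 * τ₀ / Ω₂) - (1 / d ^ (-α)) * τ₀ / P)
    with hC_def
  have ha : 0 < a := by rw [ha_def]; positivity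
  have hb : 0 < b := by rw [hb_def]; positivity
  have hC : 0 < C := by rw [hC_def]; positivity
  have himg : (fun v : ℝ => v / (η * P) + τ₀ / P) '' Ioi 0 = Ioi (τ₀ / P) := by
    ext x
    simp only [mem_image, mem_Ioi]
    constructor
    · rintro ⟨v, hv, rfl⟩
      have : 0 < v / (η * P) := by positivity
      linarith
    · intro hx
      refine ⟨(x - τ₀ / P) * (η * P), by nlinarith, ?_⟩
      field_simp
      ring
  have hder : ∀ v ∈ Ioi (0:ℝ), HasDerivWithinAt (fun v : ℝ => v / (η * P) + τ₀ / P)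
      (1 / (η * P)) (Ioi 0) v := fun v _ =>
    (((hasDerivAt_id v).div_const (η * P)).add_const (τ₀ / P)).hasDerivWithinAt
  have hinj : InjOn (fun v : ℝ => v / (η * P) + τ₀ / P) (Ioi 0) := by
    intro u _ v _ h
    simp only at h
    have h2 : u / (η * P) = v / (η * P) := by linarith
    field_simp at h2
    exact h2
  have key : ∀ v ∈ Ioi (0:ℝ),
      |1 / (η * P)| • F (v / (η * P) + τ₀ / P) = C * Real.exp (-(a / v) - b * v) := by
    intro v hv
    have hv0 : (0:ℝ) < v := hv
    have h1 : η * (P * (v / (η * P) + τ₀ / P) - τ₀) = v := by field_simp; ring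
    simp only [smul_eq_mul, hF_def]
    rw [h1, abs_of_pos (by positivity)]
    rw [hC_def, mul_assoc (1 / d ^ (-α)), ← Real.exp_add,
      mul_assoc (1 / d ^ (-α) / (η * P)), ← Real.exp_add, ← mul_assoc]
    congr 1
    · ring
    · congr 1
      rw [ha_def, hb_def]
      field_simp
      ring
  have hFint : IntegrableOn F (Ioi (τ₀ / P)) := by
    rw [← himg, integrableOn_image_iff_integrableOn_abs_deriv_smul measurableSet_Ioi hder hinj]
    exact IntegrableOn.congr_fun ((bessel_integral ha hb).1.const_mul C)
      (fun v hv => (key v hv).symm) measurableSet_Ioi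
  have hFnn : 0 ≤ᵐ[volume.restrict (Ioi (τ₀ / P))] F := by
    filter_upwards with x
    rw [hF_def]
    positivity
  rw [← MeasureTheory.ofReal_integral_eq_lintegral_ofReal hFint hFnn]
  congr 1
  have hval : ∫ x in Ioi (τ₀ / P), F x
      = C * ((2 * Real.sqrt (a / b)) * besselK 1 (2 * Real.sqrt (a * b))) := by
    rw [← himg, integral_image_eq_integral_abs_deriv_smul measurableSet_Ioi hder hinj,
      setIntegral_congr_fun measurableSet_Ioi key, MeasureTheory.integral_const_mul,
      (bessel_integral ha hb).2]
  rw [hval]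
  have hrad : a * b = τ₀ / (η * P * d ^ (-α) * Ω₂) := by
    rw [ha_def, hb_def, div_div, div_mul_div_comm, mul_one]
    congr 1
    ring
  have hbs : b * Real.sqrt (a / b) = Real.sqrt (a * b) := by
    rw [← Real.sqrt_sq hb.le, ← Real.sqrt_mul (sq_nonneg b)]
    congr 1
    rw [Real.sqrt_sq hb.le]
    field_simp
  have hE : -(σ2 * τ₀ / Ω₂) - (1 / d ^ (-α)) * τ₀ / P = -(σ2 * τ₀ / Ω₂) - τ₀ * d ^ α / P := by
    rw [hr₁_eq]; ring
  calc C * ((2 * Real.sqrt (a / b)) * besselK 1 (2 * Real.sqrt (a * b)))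
      = Real.exp (-(σ2 * τ₀ / Ω₂) - (1 / d ^ (-α)) * τ₀ / P) * (2 * (b * Real.sqrt (a / b)))
        * besselK 1 (2 * Real.sqrt (a * b)) := by rw [hC_def, hb_def]; ring
    _ = Real.exp (-(σ2 * τ₀ / Ω₂) - τ₀ * d ^ α / P) * (2 * Real.sqrt (τ₀ / (η * P * d ^ (-α) * Ω₂)))
        * besselK 1 (2 * Real.sqrt (τ₀ / (η * P * d ^ (-α) * Ω₂))) := by
          rw [hbs, hrad, hE]
end

section
/- Let δ ∈ (0,1), τ₁ > 0, σ_ic² > 0 with δ ≥ 1/(τ₁σ_ic² + 1). Then for every g₁ > 0, c > 0, σ² ≥ 0, the imperfect-SIC SINR (1−δ)·c·g₁/(c·σ² + c·δ·g₁·σ_ic² + 1) is strictly less than τ₁; i.e., the strong user is always in outage. -/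
theorem imperfect_sic_always_outage (δ τ₁ σic : ℝ)
    (hδ : δ ∈ Set.Ioo (0 : ℝ) 1) (hτ₁ : 0 < τ₁) (hσic : 0 < σic)
    (hδge : 1 / (τ₁ * σic + 1) ≤ δ) :
    ∀ g₁ c σ2 : ℝ, 0 < g₁ → 0 < c → 0 ≤ σ2 →
      (1 - δ) * c * g₁ / (c * σ2 + c * δ * g₁ * σic + 1) < τ₁ := by
  obtain ⟨hδ0, hδ1⟩ := hδ
  intro g₁ c σ2 hg hc hσ2
  have hpos : 0 < τ₁ * σic + 1 := by positivity
  have key : 1 - δ ≤ τ₁ * σic * δ := by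
    rw [div_le_iff₀ hpos] at hδge
    nlinarith
  have hden : 0 < c * σ2 + c * δ * g₁ * σic + 1 := by positivity
  rw [div_lt_iff₀ hden]
  nlinarith [mul_pos hc hg, mul_nonneg (mul_nonneg hc.le hσ2) hτ₁.le]
end

section
/- Let τ₀ = τ₁ + τ₂ + τ₁τ₂ with τ₁, τ₂ > 0 and σ_ic² ≥ 0. Define Φ₁ = τ₂/(δ(τ₂+1) − τ₂) and Φ₂′ = τ₁/(1 − δ(τ₁σ_ic² + 1)) for δ ∈ (τ₂/(τ₂+1), 1/(τ₁σ_ic²+1)). Then Φ₁ ≥ Φ₂′ if and only if δ ≤ (τ₀ − τ₁)/(τ₀ + τ₁τ₂σ_ic²). When σ_ic² = 0 this threshold reduces to (τ₀ − τ₁)/τ₀. -/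
theorem imperfect_sic_threshold (τ₀ τ₁ τ₂ σic δ : ℝ)
    (hτ₁ : 0 < τ₁) (hτ₂ : 0 < τ₂) (hσic : 0 ≤ σic)
    (hτ₀ : τ₀ = τ₁ + τ₂ + τ₁ * τ₂)
    (hδ : δ ∈ Set.Ioo (τ₂ / (τ₂ + 1)) (1 / (τ₁ * σic + 1))) :
    (τ₁ / (1 - δ * (τ₁ * σic + 1)) ≤ τ₂ / (δ * (τ₂ + 1) - τ₂) ↔
        δ ≤ (τ₀ - τ₁) / (τ₀ + τ₁ * τ₂ * σic)) ∧
      (σic = 0 → (τ₀ - τ₁) / (τ₀ + τ₁ * τ₂ * σic) = (τ₀ - τ₁) / τ₀) := by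
  obtain ⟨h1, h2⟩ := hδ
  have hp1 : (0:ℝ) < τ₂ + 1 := by linarith
  have hp2 : (0:ℝ) < τ₁ * σic + 1 := by positivity
  have hA : 0 < δ * (τ₂ + 1) - τ₂ := by
    have := (div_lt_iff₀ hp1).mp h1; linarith [this]
  have hB : 0 < 1 - δ * (τ₁ * σic + 1) := by
    have := (lt_div_iff₀ hp2).mp h2; nlinarith
  have hD : 0 < τ₀ + τ₁ * τ₂ * σic := by nlinarith
  constructor
  · rw [div_le_div_iff₀ hB hA, le_div_iff₀ hD]
    constructor <;> intro h <;> nlinarith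
  · intro h; rw [h]; ring_nf
end
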